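/- Fix 0 < μ < v̄, an integer n ≥ 1, prices 0 < v₁ ≤ v₂ ≤ ⋯ ≤ vₙ ≤ v̄ with v_{n+1} := v̄, and probabilities x₁,…,xₙ ≥ 0 with Σᵢxᵢ = 1. Then the worst-case expected revenue over the mean ambiguity set, inf_{F ∈ 𝓕_mean} Σ_{i=1}^n vᵢxᵢF([vᵢ, v̄]), equals the optimal value of the finite linear program: maximize λ₀ over λ₀ ∈ ℝ and λ₁ ≥ 0 subject to λ₀ + λ₁(v_j − μ) ≤ Σ_{i=1}^{j−1} vᵢxᵢ for all j = 1,…,n+1 (where the sum over an empty index range is 0). -/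

import Mathlib

open MeasureTheory Set

noncomputable section

/-- The mean ambiguity set: probability measures on `[0, v̄]` with mean at least `μ`. -/
def Fmean (μ vbar : ℝ) : Set (Measure ℝ) :=
  {F | IsProbabilityMeasure F ∧ F (Icc (0 : ℝ) vbar) = 1 ∧ μ ≤ ∫ t, t ∂F}

lemma key_lemma (J : Finset ℕ) (hJ : J.Nonempty) (c a : ℕ → ℝ)
    (hc0 : ∀ j ∈ J, 0 ≤ c j) (hc1 : ∃ j1 ∈ J, c j1 = 0)
    (hex : ∃ j0 ∈ J, 0 < a j0) :
    ∃ j ∈ J, ∃ k ∈ J, ∃ p : ℝ, 0 ≤ p ∧ p ≤ 1 ∧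
      0 ≤ p * a j + (1 - p) * a k ∧
      p * c j + (1 - p) * c k ≤
        sSup {t : ℝ | ∃ l, 0 ≤ l ∧ ∀ j ∈ J, t + l * a j ≤ c j} := by
  obtain ⟨j0, hj0, ha0⟩ := hex
  set D := {t : ℝ | ∃ l, 0 ≤ l ∧ ∀ j ∈ J, t + l * a j ≤ c j} with hD
  set V := sSup D with hV
  have hD0 : (0:ℝ) ∈ D := ⟨0, le_refl _, fun j hj => by simpa using hc0 j hj⟩
  have hDne : D.Nonempty := ⟨0, hD0⟩
  have hbdd : BddAbove D := by
    refine ⟨c j0, fun t ht => ?_⟩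
    obtain ⟨l, hl, hcon⟩ := ht
    have := hcon j0 hj0
    nlinarith
  have hV0 : 0 ≤ V := le_csSup hbdd hD0
  set φ : ℝ → ℝ := fun l => J.inf' hJ (fun j => c j - l * a j) with hφ
  have hφmem : ∀ l, 0 ≤ l → φ l ∈ D := by
    intro l hl
    refine ⟨l, hl, fun j hj => ?_⟩
    have := Finset.inf'_le (fun j => c j - l * a j) hj
    linarith [this]
  have hφleV : ∀ l, 0 ≤ l → φ l ≤ V := fun l hl => le_csSup hbdd (hφmem l hl)
  have hφ0 : 0 ≤ φ 0 := by
    apply Finset.le_inf'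
    intro j hj
    simpa using hc0 j hj
  set L := (c j0 + 1) / a j0 with hLdef
  have hL0 : 0 < L := by
    apply div_pos _ ha0
    have := hc0 j0 hj0; linarith
  have hcont : Continuous φ := by
    apply Continuous.finset_inf'_apply hJ
    intro i _
    continuity
  obtain ⟨ls, hlsmem, hmax⟩ := isCompact_Icc.exists_isMaxOn (Set.nonempty_Icc.2 hL0.le)
    hcont.continuousOn
  obtain ⟨hls0, hlsL⟩ := hlsmem
  have hVφ : V = φ ls := by
    apply le_antisymm
    · apply csSup_le hDne
      intro t ht
      obtain ⟨l, hl, hcon⟩ := ht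
      have htφ : t ≤ φ l := by
        apply Finset.le_inf'
        intro j hj
        have := hcon j hj; linarith
      by_cases hlL : l ≤ L
      · exact htφ.trans (hmax ⟨hl, hlL⟩)
      · push_neg at hlL
        have h1 : t ≤ c j0 - l * a j0 := by have := hcon j0 hj0; linarith
        have h2 : c j0 - l * a j0 < -1 := by
          have : L * a j0 = c j0 + 1 := div_mul_cancel₀ _ (ne_of_gt ha0)
          nlinarith
        have h3 : (0:ℝ) ≤ φ ls := hφ0.trans (hmax ⟨le_refl _, hL0.le⟩)
        linarith
    · exact hφleV ls hls0
  have hle_all : ∀ j ∈ J, V ≤ c j - ls * a j := by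
    intro j hj
    rw [hVφ]
    exact Finset.inf'_le _ hj
  -- Claim 1 : exists k with a k ≥ 0 and active
  have claim1 : ∃ k ∈ J, 0 ≤ a k ∧ c k - ls * a k ≤ V := by
    by_contra h
    push_neg at h
    set amax := J.sup' hJ a with hamax
    have hamax0 : 0 < amax := lt_of_lt_of_le ha0 (Finset.le_sup' a hj0)
    set ε := J.inf' hJ (fun j => if 0 ≤ a j then (c j - ls * a j - V) / (2 * amax) else 1)
      with hε
    have hε0 : 0 < ε := by
      rw [Finset.lt_inf'_iff]
      intro j hj
      by_cases haj : 0 ≤ a j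
      · rw [if_pos haj]
        exact div_pos (by linarith [h j hj haj]) (by linarith)
      · rw [if_neg haj]; norm_num
    have hcontra : V < φ (ls + ε) := by
      rw [hφ]
      rw [Finset.lt_inf'_iff]
      intro j hj
      by_cases haj : 0 ≤ a j
      · have hεle : ε ≤ (c j - ls * a j - V) / (2 * amax) := by
          have h0 := Finset.inf'_le (fun j => if 0 ≤ a j then (c j - ls * a j - V) / (2 * amax) else 1) hj
          rwa [if_pos haj] at h0
        have hja : a j ≤ amax := Finset.le_sup' a hj
        have hslack := h j hj haj
        rw [le_div_iff₀ (by linarith : (0:ℝ) < 2 * amax)] at hεle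
        have h2 : ε * a j ≤ ε * amax := mul_le_mul_of_nonneg_left hja hε0.le
        have hexp : c j - (ls + ε) * a j = c j - ls * a j - ε * a j := by ring
        rw [hexp]
        linarith
      · push_neg at haj
        have h1 := hle_all j hj
        nlinarith
    have := hφleV (ls + ε) (by linarith)
    linarith
  obtain ⟨k, hk, hak, hck⟩ := claim1
  by_cases hcase : c k ≤ V
  · exact ⟨k, hk, k, hk, 1, by norm_num, by norm_num, by simpa using hak, by linarith⟩
  · push_neg at hcase
    have hlsak : 0 < ls * a k := by nlinarith
    have hakpos : 0 < a k := by
      rcases hak.lt_or_eq with h' | h'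
      · exact h'
      · exfalso; rw [← h'] at hlsak; simp at hlsak
    have hls : 0 < ls := by nlinarith
    have claim2 : ∃ j ∈ J, a j ≤ 0 ∧ c j - ls * a j ≤ V := by
      by_contra h
      push_neg at h
      set ε := J.inf' hJ (fun j => if a j ≤ 0 then (c j - ls * a j - V) / (2 * (1 - a j)) else ls)
        with hε
      have hε0 : 0 < ε := by
        rw [Finset.lt_inf'_iff]
        intro j hj
        by_cases haj : a j ≤ 0
        · rw [if_pos haj]
          have h1 := h j hj haj
          have h2 : (0:ℝ) < 1 - a j := by linarith
          exact div_pos (by linarith) (by linarith)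
        · rw [if_neg haj]; exact hls
      have hεls : ε ≤ ls := by
        have h0 := Finset.inf'_le (fun j => if a j ≤ 0 then (c j - ls * a j - V) / (2 * (1 - a j)) else ls) hk
        rwa [if_neg (not_le.2 hakpos)] at h0
      have hcontra : V < φ (ls - ε) := by
        rw [hφ]
        rw [Finset.lt_inf'_iff]
        intro j hj
        by_cases haj : a j ≤ 0
        · have hεle : ε ≤ (c j - ls * a j - V) / (2 * (1 - a j)) := by
            have h0 := Finset.inf'_le (fun j => if a j ≤ 0 then (c j - ls * a j - V) / (2 * (1 - a j)) else ls) hj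
            rwa [if_pos haj] at h0
          have hslack := h j hj haj
          have h2 : (0:ℝ) < 1 - a j := by linarith
          rw [le_div_iff₀ (by linarith : (0:ℝ) < 2 * (1 - a j))] at hεle
          have h3 : ε * (- a j) ≤ ε * (1 - a j) := mul_le_mul_of_nonneg_left (by linarith) hε0.le
          have hexp : c j - (ls - ε) * a j = c j - ls * a j + ε * a j := by ring
          rw [hexp]
          linarith
        · push_neg at haj
          have h1 := hle_all j hj
          nlinarith
      have := hφleV (ls - ε) (by linarith)
      linarith
    obtain ⟨j, hj, haj, hcj⟩ := claim2
    have hne : a k - a j ≠ 0 := ne_of_gt (by linarith)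
    have hzero : a k / (a k - a j) * a j + (1 - a k / (a k - a j)) * a k = 0 := by
      field_simp
      ring
    have hp1 : (0:ℝ) ≤ a k / (a k - a j) := div_nonneg hakpos.le (by linarith)
    have hp2 : a k / (a k - a j) ≤ 1 := by rw [div_le_one (by linarith)]; linarith
    refine ⟨j, hj, k, hk, a k / (a k - a j), hp1, hp2, le_of_eq hzero.symm, ?_⟩
    have h1 : c j ≤ V + ls * a j := by linarith
    have h2 : c k ≤ V + ls * a k := by linarith
    nlinarith [mul_le_mul_of_nonneg_left h1 hp1, mul_le_mul_of_nonneg_left h2 (by linarith : (0:ℝ) ≤ 1 - a k / (a k - a j))]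

lemma weak_dual (μ vbar : ℝ) (hvbar : 0 < vbar) (n : ℕ) (v x : ℕ → ℝ)
    (hvnn : ∀ i ∈ Finset.Icc 1 n, 0 ≤ v i * x i)
    (hvtop : v (n + 1) = vbar)
    (t l : ℝ) (hl : 0 ≤ l)
    (hcon : ∀ j ∈ Finset.Icc 1 (n + 1),
      t + l * (v j - μ) ≤ ∑ i ∈ Finset.Icc 1 (j - 1), v i * x i)
    (F : Measure ℝ) (hF : F ∈ Fmean μ vbar) :
    t ≤ ∑ i ∈ Finset.Icc 1 n, v i * x i * (F (Icc (v i) vbar)).toReal := by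
  obtain ⟨hFP, hFsupp, hFmean⟩ := hF
  haveI := hFP
  set g : ℝ → ℝ := fun y =>
    ∑ i ∈ Finset.Icc 1 n, (Icc (v i) vbar).indicator (fun _ => v i * x i) y with hg
  have hint_i : ∀ i ∈ Finset.Icc 1 n,
      Integrable ((Icc (v i) vbar).indicator (fun _ => v i * x i)) F :=
    fun i _ => (integrable_const (v i * x i)).indicator measurableSet_Icc
  have hgint : Integrable g F := integrable_finset_sum _ hint_i
  have hgR : ∫ y, g y ∂F = ∑ i ∈ Finset.Icc 1 n, v i * x i * (F (Icc (v i) vbar)).toReal := by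
    rw [integral_finset_sum _ hint_i]
    refine Finset.sum_congr rfl fun i _ => ?_
    rw [integral_indicator_const _ measurableSet_Icc]
    simp [mul_comm]
    exact Or.inl rfl
  have hcompl : F (Icc (0:ℝ) vbar)ᶜ = 0 :=
    (prob_compl_eq_zero_iff measurableSet_Icc).2 hFsupp
  have hae : ∀ᵐ y ∂F, y ∈ Icc (0:ℝ) vbar := by
    rw [ae_iff]
    have hset : {y : ℝ | ¬ y ∈ Icc (0:ℝ) vbar} = (Icc (0:ℝ) vbar)ᶜ := rfl
    rw [hset]
    exact hcompl
  have hpt : ∀ y ∈ Icc (0:ℝ) vbar, t + l * (y - μ) ≤ g y := by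
    intro y hy
    set S := (Finset.Icc 1 (n + 1)).filter (fun j => y ≤ v j) with hS
    have hSne : S.Nonempty := by
      refine ⟨n + 1, Finset.mem_filter.2 ⟨Finset.mem_Icc.2 ⟨by omega, le_refl _⟩, ?_⟩⟩
      rw [hvtop]; exact hy.2
    set j := S.min' hSne with hj
    have hjS : j ∈ S := S.min'_mem hSne
    obtain ⟨hjI, hjy⟩ := Finset.mem_filter.1 hjS
    obtain ⟨hj1, hjn⟩ := Finset.mem_Icc.1 hjI
    have hstep1 : ∑ i ∈ Finset.Icc 1 (j - 1), v i * x i ≤ g y := by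
      rw [hg]
      have hsub : Finset.Icc 1 (j - 1) ⊆ Finset.Icc 1 n := by
        intro i hi
        rw [Finset.mem_Icc] at hi ⊢
        omega
      have heq : ∀ i ∈ Finset.Icc 1 (j - 1),
          v i * x i = (Icc (v i) vbar).indicator (fun _ => v i * x i) y := by
        intro i hi
        rw [Finset.mem_Icc] at hi
        have hiS : i ∉ S := by
          intro hiS
          have := S.min'_le i hiS
          omega
        have hvi : v i < y := by
          by_contra hc
          push_neg at hc
          exact hiS (Finset.mem_filter.2 ⟨Finset.mem_Icc.2 ⟨hi.1, by omega⟩, hc⟩)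
        rw [Set.indicator_of_mem (show y ∈ Icc (v i) vbar from ⟨hvi.le, hy.2⟩)]
      rw [Finset.sum_congr rfl heq]
      apply Finset.sum_le_sum_of_subset_of_nonneg hsub
      intro i hi _
      exact indicator_nonneg (fun _ _ => hvnn i hi) y
    have hstep2 : t + l * (y - μ) ≤ t + l * (v j - μ) := by
      have : l * (y - μ) ≤ l * (v j - μ) := mul_le_mul_of_nonneg_left (by linarith) hl
      linarith
    exact hstep2.trans ((hcon j hjI).trans hstep1)
  have hid : Integrable (fun y => y) F := by
    apply Integrable.mono' (integrable_const vbar) measurable_id.aestronglyMeasurable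
    filter_upwards [hae] with y hy
    obtain ⟨hy1, hy2⟩ := hy
    rw [Real.norm_eq_abs, abs_le]
    simp only [id_eq]
    constructor <;> linarith
  have hhint : Integrable (fun y => t + l * (y - μ)) F :=
    (integrable_const t).add (((hid.sub (integrable_const μ)).const_mul l))
  have hhval : ∫ y, (t + l * (y - μ)) ∂F = t + l * ((∫ y, y ∂F) - μ) := by
    have hfun : (fun y : ℝ => t + l * (y - μ)) = fun y => (t - l * μ) + l * y := by
      funext y; ring
    rw [hfun, integral_add (integrable_const _) (hid.const_mul l), integral_const_mul,
      integral_const]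
    simp only [measure_univ, probReal_univ, ENNReal.toReal_one, smul_eq_mul, one_mul]
    ring
  have hmono : ∫ y, (t + l * (y - μ)) ∂F ≤ ∫ y, g y ∂F := by
    apply integral_mono_ae hhint hgint
    filter_upwards [hae] with y hy
    exact hpt y hy
  have : t ≤ t + l * ((∫ y, y ∂F) - μ) := by
    nlinarith [mul_nonneg hl (by linarith [hFmean] : (0:ℝ) ≤ (∫ y, y ∂F) - μ)]
  calc t ≤ t + l * ((∫ y, y ∂F) - μ) := this
    _ = ∫ y, (t + l * (y - μ)) ∂F := hhval.symm
    _ ≤ ∫ y, g y ∂F := hmono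
    _ = _ := hgR

set_option maxHeartbeats 1000000 in
lemma construct (μ vbar : ℝ) (hμ : 0 < μ) (hμv : μ < vbar)
    (n : ℕ) (v x : ℕ → ℝ)
    (hv0 : 0 < v 1)
    (hmono' : ∀ i j, 1 ≤ i → i ≤ j → j ≤ n + 1 → v i ≤ v j)
    (hvtop : v (n + 1) = vbar)
    (hvnn : ∀ i ∈ Finset.Icc 1 n, 0 ≤ v i * x i)
    (j k : ℕ) (hj : j ∈ Finset.Icc 1 (n + 1)) (hk : k ∈ Finset.Icc 1 (n + 1))
    (p : ℝ) (hp0 : 0 ≤ p) (hp1 : p ≤ 1) (hmean : μ ≤ p * v j + (1 - p) * v k)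
    (δ : ℝ) (hδ0 : 0 < δ) (hδ1 : δ < v 1) (hδ2 : δ ≤ vbar - μ) :
    ∃ F ∈ Fmean μ vbar,
      ∑ i ∈ Finset.Icc 1 n, v i * x i * (F (Icc (v i) vbar)).toReal ≤
        (p * (∑ i ∈ Finset.Icc 1 (j - 1), v i * x i)
          + (1 - p) * (∑ i ∈ Finset.Icc 1 (k - 1), v i * x i))
        + (δ / (vbar - μ)) * (∑ i ∈ Finset.Icc 1 n, v i * x i) := by
  obtain ⟨hj1, hjn⟩ := Finset.mem_Icc.1 hj
  obtain ⟨hk1, hkn⟩ := Finset.mem_Icc.1 hk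
  set η := δ / (vbar - μ) with hη
  have hvμ : (0:ℝ) < vbar - μ := by linarith
  have hη0 : 0 < η := div_pos hδ0 hvμ
  have hη1 : η ≤ 1 := by rw [div_le_one hvμ]; linarith
  have hηδ : η * (vbar - μ) = δ := div_mul_cancel₀ _ (ne_of_gt hvμ)
  set s1 := (1 - η) * p with hs1
  set s2 := (1 - η) * (1 - p) with hs2
  have hs10 : 0 ≤ s1 := mul_nonneg (by linarith) hp0
  have hs20 : 0 ≤ s2 := mul_nonneg (by linarith) (by linarith)
  have hsum3 : s1 + s2 + η = 1 := by rw [hs1, hs2]; ring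
  set b1 := v j - δ with hb1
  set b2 := v k - δ with hb2
  have hvj1 : v 1 ≤ v j := hmono' 1 j le_rfl hj1 hjn
  have hvk1 : v 1 ≤ v k := hmono' 1 k le_rfl hk1 hkn
  have hvjv : v j ≤ vbar := hvtop ▸ hmono' j (n + 1) hj1 hjn le_rfl
  have hvkv : v k ≤ vbar := hvtop ▸ hmono' k (n + 1) hk1 hkn le_rfl
  have hb1mem : b1 ∈ Icc (0:ℝ) vbar := ⟨by simp only [hb1]; linarith, by simp only [hb1]; linarith⟩
  have hb2mem : b2 ∈ Icc (0:ℝ) vbar := ⟨by simp only [hb2]; linarith, by simp only [hb2]; linarith⟩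
  have hvmem : vbar ∈ Icc (0:ℝ) vbar := ⟨by linarith, le_rfl⟩
  set F : Measure ℝ := ENNReal.ofReal s1 • Measure.dirac b1
    + ENNReal.ofReal s2 • Measure.dirac b2 + ENNReal.ofReal η • Measure.dirac vbar with hF
  have hFapp : ∀ s : Set ℝ, F s = ENNReal.ofReal s1 * Measure.dirac b1 s
      + ENNReal.ofReal s2 * Measure.dirac b2 s + ENNReal.ofReal η * Measure.dirac vbar s := by
    intro s
    simp [hF, Measure.add_apply, Measure.smul_apply, smul_eq_mul]
  have hofsum : ∀ u1 u2 u3 : ℝ, 0 ≤ u1 → 0 ≤ u2 → 0 ≤ u3 →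
      ENNReal.ofReal u1 + ENNReal.ofReal u2 + ENNReal.ofReal u3
        = ENNReal.ofReal (u1 + u2 + u3) := by
    intro u1 u2 u3 h1 h2 h3
    rw [← ENNReal.ofReal_add h1 h2, ← ENNReal.ofReal_add (by linarith) h3]
  have hFuniv : F univ = 1 := by
    rw [hFapp]
    simp only [measure_univ, mul_one]
    rw [hofsum _ _ _ hs10 hs20 hη0.le, hsum3, ENNReal.ofReal_one]
  haveI hFP : IsProbabilityMeasure F := ⟨hFuniv⟩
  have hFIcc : F (Icc (0:ℝ) vbar) = 1 := by
    rw [hFapp]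
    rw [Measure.dirac_apply_of_mem hb1mem, Measure.dirac_apply_of_mem hb2mem,
      Measure.dirac_apply_of_mem hvmem]
    simp only [mul_one]
    rw [hofsum _ _ _ hs10 hs20 hη0.le, hsum3, ENNReal.ofReal_one]
  have hint_dirac : ∀ b : ℝ, Integrable (fun y : ℝ => y) (Measure.dirac b) := by
    intro b
    refine ⟨measurable_id.aestronglyMeasurable, ?_⟩
    simp [HasFiniteIntegral, lintegral_dirac]
  have hid_int : ∀ (b : ℝ) (u : ℝ), Integrable (fun y : ℝ => y)
      (ENNReal.ofReal u • Measure.dirac b) :=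
    fun b u => (hint_dirac b).smul_measure ENNReal.ofReal_ne_top
  have hmeanF : ∫ y, y ∂F = s1 * b1 + s2 * b2 + η * vbar := by
    rw [hF]
    rw [integral_add_measure (((hid_int b1 s1).add_measure (hid_int b2 s2))) (hid_int vbar η),
      integral_add_measure (hid_int b1 s1) (hid_int b2 s2)]
    rw [integral_smul_measure, integral_smul_measure, integral_smul_measure]
    rw [integral_dirac, integral_dirac, integral_dirac]
    rw [ENNReal.toReal_ofReal hs10, ENNReal.toReal_ofReal hs20, ENNReal.toReal_ofReal hη0.le]
    simp [smul_eq_mul]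
  have hmeange : μ ≤ ∫ y, y ∂F := by
    rw [hmeanF]
    have hexp : s1 * b1 + s2 * b2 + η * vbar
        = (1 - η) * (p * v j + (1 - p) * v k) - (1 - η) * δ + η * vbar := by
      rw [hs1, hs2, hb1, hb2]; ring
    rw [hexp]
    have h1 : (1 - η) * (p * v j + (1 - p) * v k) ≥ (1 - η) * μ :=
      mul_le_mul_of_nonneg_left hmean (by linarith)
    nlinarith
  have hFmem : F ∈ Fmean μ vbar := ⟨hFP, hFIcc, hmeange⟩
  refine ⟨F, hFmem, ?_⟩
  -- revenue computation
  have htoReal : ∀ i ∈ Finset.Icc 1 n, (F (Icc (v i) vbar)).toReal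
      = s1 * (if v i ≤ b1 then (1:ℝ) else 0) + s2 * (if v i ≤ b2 then (1:ℝ) else 0) + η := by
    intro i hi
    obtain ⟨hi1, hin⟩ := Finset.mem_Icc.1 hi
    have hvib : v i ≤ vbar := hvtop ▸ hmono' i (n + 1) hi1 (by omega) le_rfl
    have hd : ∀ b : ℝ, b ∈ Icc (0:ℝ) vbar → Measure.dirac b (Icc (v i) vbar)
        = ENNReal.ofReal (if v i ≤ b then (1:ℝ) else 0) := by
      intro b hb
      by_cases hvb : v i ≤ b
      · rw [Measure.dirac_apply_of_mem (Set.mem_Icc.2 ⟨hvb, hb.2⟩), if_pos hvb,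
          ENNReal.ofReal_one]
      · rw [if_neg hvb, ENNReal.ofReal_zero, Measure.dirac_apply' _ measurableSet_Icc,
          Set.indicator_of_notMem (fun hmem => hvb (Set.mem_Icc.1 hmem).1)]
    rw [hFapp, hd b1 hb1mem, hd b2 hb2mem, hd vbar hvmem]
    rw [if_pos hvib]
    rw [← ENNReal.ofReal_mul hs10, ← ENNReal.ofReal_mul hs20, ← ENNReal.ofReal_mul hη0.le]
    rw [hofsum _ _ _ (mul_nonneg hs10 (by positivity)) (mul_nonneg hs20 (by positivity))
      (by linarith)]
    rw [ENNReal.toReal_ofReal (by positivity)]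
    ring_nf
  have hsplit : ∑ i ∈ Finset.Icc 1 n, v i * x i * (F (Icc (v i) vbar)).toReal
      = s1 * (∑ i ∈ Finset.Icc 1 n, v i * x i * (if v i ≤ b1 then (1:ℝ) else 0))
      + s2 * (∑ i ∈ Finset.Icc 1 n, v i * x i * (if v i ≤ b2 then (1:ℝ) else 0))
      + η * (∑ i ∈ Finset.Icc 1 n, v i * x i) := by
    rw [Finset.mul_sum, Finset.mul_sum, Finset.mul_sum, ← Finset.sum_add_distrib,
      ← Finset.sum_add_distrib]
    refine Finset.sum_congr rfl fun i hi => ?_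
    rw [htoReal i hi]; ring
  have hbound : ∀ jj, 1 ≤ jj → jj ≤ n + 1 →
      ∑ i ∈ Finset.Icc 1 n, v i * x i * (if v i ≤ v jj - δ then (1:ℝ) else 0)
        ≤ ∑ i ∈ Finset.Icc 1 (jj - 1), v i * x i := by
    intro jj hjj1 hjjn
    simp only [mul_ite, mul_one, mul_zero]
    rw [← Finset.sum_filter]
    apply Finset.sum_le_sum_of_subset_of_nonneg
    · intro i hi
      obtain ⟨hiI, hile⟩ := Finset.mem_filter.1 hi
      obtain ⟨hi1, hin⟩ := Finset.mem_Icc.1 hiI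
      rw [Finset.mem_Icc]
      refine ⟨hi1, ?_⟩
      by_contra hc
      push_neg at hc
      have := hmono' jj i hjj1 (by omega) (by omega)
      linarith
    · intro i hi _
      obtain ⟨hi1, hin⟩ := Finset.mem_Icc.1 hi
      exact hvnn i (Finset.mem_Icc.2 ⟨hi1, by omega⟩)
  have h1 := hbound j hj1 hjn
  have h2 := hbound k hk1 hkn
  have hT0 : 0 ≤ ∑ i ∈ Finset.Icc 1 n, v i * x i := Finset.sum_nonneg hvnn
  have hcj0 : 0 ≤ ∑ i ∈ Finset.Icc 1 (j - 1), v i * x i := by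
    apply Finset.sum_nonneg
    intro i hi
    obtain ⟨hi1, hin⟩ := Finset.mem_Icc.1 hi
    exact hvnn i (Finset.mem_Icc.2 ⟨hi1, by omega⟩)
  have hck0 : 0 ≤ ∑ i ∈ Finset.Icc 1 (k - 1), v i * x i := by
    apply Finset.sum_nonneg
    intro i hi
    obtain ⟨hi1, hin⟩ := Finset.mem_Icc.1 hi
    exact hvnn i (Finset.mem_Icc.2 ⟨hi1, by omega⟩)
  rw [hsplit, hs1, hs2]
  have e1 : s1 * (∑ i ∈ Finset.Icc 1 n, v i * x i * (if v i ≤ b1 then (1:ℝ) else 0))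
      ≤ s1 * (∑ i ∈ Finset.Icc 1 (j - 1), v i * x i) := mul_le_mul_of_nonneg_left h1 hs10
  have e2 : s2 * (∑ i ∈ Finset.Icc 1 n, v i * x i * (if v i ≤ b2 then (1:ℝ) else 0))
      ≤ s2 * (∑ i ∈ Finset.Icc 1 (k - 1), v i * x i) := mul_le_mul_of_nonneg_left h2 hs20
  have e3 : 0 ≤ η * p * (∑ i ∈ Finset.Icc 1 (j - 1), v i * x i) :=
    mul_nonneg (mul_nonneg hη0.le hp0) hcj0
  have e4 : 0 ≤ η * (1 - p) * (∑ i ∈ Finset.Icc 1 (k - 1), v i * x i) :=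
    mul_nonneg (mul_nonneg hη0.le (by linarith)) hck0
  rw [hs1] at e1
  rw [hs2] at e2
  linarith [e1, e2, e3, e4]

theorem stmt17 (μ vbar : ℝ) (hμ : 0 < μ) (hμv : μ < vbar)
    (n : ℕ) (hn : 1 ≤ n) (v x : ℕ → ℝ)
    (hv0 : 0 < v 1)
    (hmono : ∀ i, 1 ≤ i → i < n → v i ≤ v (i + 1))
    (hvn : v n ≤ vbar) (hvtop : v (n + 1) = vbar)
    (hx : ∀ i ∈ Finset.Icc 1 n, 0 ≤ x i)
    (hsum : ∑ i ∈ Finset.Icc 1 n, x i = 1) :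
    (⨅ F : ↥(Fmean μ vbar),
        ∑ i ∈ Finset.Icc 1 n, v i * x i * (F.1 (Icc (v i) vbar)).toReal) =
      sSup {t : ℝ | ∃ l : ℝ, 0 ≤ l ∧
        ∀ j ∈ Finset.Icc 1 (n + 1),
          t + l * (v j - μ) ≤ ∑ i ∈ Finset.Icc 1 (j - 1), v i * x i} := by
  -- monotonicity helpers
  have hchain : ∀ j, j ≤ n → ∀ i, 1 ≤ i → i ≤ j → v i ≤ v j := by
    intro j
    induction j with
    | zero => intro _ i hi1 hij; omega
    | succ m ih =>
      intro hm i hi1 hij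
      rcases Nat.lt_or_ge i (m + 1) with hlt | hge
      · have him : i ≤ m := by omega
        have h1m : 1 ≤ m := by omega
        calc v i ≤ v m := ih (by omega) i hi1 him
          _ ≤ v (m + 1) := hmono m h1m (by omega)
      · have : i = m + 1 := by omega
        rw [this]
  have hmono' : ∀ i j, 1 ≤ i → i ≤ j → j ≤ n + 1 → v i ≤ v j := by
    intro i j hi1 hij hjn
    rcases Nat.lt_or_ge j (n + 1) with hlt | hge
    · exact hchain j (by omega) i hi1 hij
    · have hj : j = n + 1 := by omega
      subst hj
      rcases Nat.lt_or_ge i (n + 1) with hlt' | hge'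
      · calc v i ≤ v n := hchain n le_rfl i hi1 (by omega)
          _ ≤ vbar := hvn
          _ = v (n + 1) := hvtop.symm
      · have : i = n + 1 := by omega
        rw [this]
  have hvnn : ∀ i ∈ Finset.Icc 1 n, 0 ≤ v i * x i := by
    intro i hi
    obtain ⟨hi1, hin⟩ := Finset.mem_Icc.1 hi
    exact mul_nonneg (le_of_lt (lt_of_lt_of_le hv0 (hmono' 1 i le_rfl hi1 (by omega)))) (hx i hi)
  set D := {t : ℝ | ∃ l : ℝ, 0 ≤ l ∧
      ∀ j ∈ Finset.Icc 1 (n + 1),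
        t + l * (v j - μ) ≤ ∑ i ∈ Finset.Icc 1 (j - 1), v i * x i} with hD
  have hJne : (Finset.Icc 1 (n + 1)).Nonempty := ⟨1, Finset.mem_Icc.2 ⟨le_rfl, by omega⟩⟩
  have hc0 : ∀ j ∈ Finset.Icc 1 (n + 1), 0 ≤ ∑ i ∈ Finset.Icc 1 (j - 1), v i * x i := by
    intro j hj
    obtain ⟨hj1, hjn⟩ := Finset.mem_Icc.1 hj
    apply Finset.sum_nonneg
    intro i hi
    obtain ⟨hi1, hin⟩ := Finset.mem_Icc.1 hi
    exact hvnn i (Finset.mem_Icc.2 ⟨hi1, by omega⟩)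
  -- the key LP fact
  obtain ⟨j, hj, k, hk, p, hp0, hp1, hpa, hpc⟩ :=
    key_lemma (Finset.Icc 1 (n + 1)) hJne
      (fun j => ∑ i ∈ Finset.Icc 1 (j - 1), v i * x i) (fun j => v j - μ)
      hc0
      ⟨1, Finset.mem_Icc.2 ⟨le_rfl, by omega⟩, by
        show ∑ i ∈ Finset.Icc 1 (1 - 1), v i * x i = 0
        rw [Finset.Icc_eq_empty (by omega), Finset.sum_empty]⟩
      ⟨n + 1, Finset.mem_Icc.2 ⟨by omega, le_rfl⟩, by
        show 0 < v (n + 1) - μ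
        rw [hvtop]; linarith⟩
  have hmean : μ ≤ p * v j + (1 - p) * v k := by nlinarith [hpa]
  set V := sSup D with hV
  have hpc' : p * (∑ i ∈ Finset.Icc 1 (j - 1), v i * x i)
      + (1 - p) * (∑ i ∈ Finset.Icc 1 (k - 1), v i * x i) ≤ V := hpc
  -- nonemptiness of Fmean and lower bound on revenues
  have hnonempty : (Fmean μ vbar).Nonempty := by
    obtain ⟨F, hF, -⟩ := construct μ vbar hμ hμv n v x hv0 hmono' hvtop hvnn j k hj hk p hp0 hp1
      hmean (min (v 1 / 2) (vbar - μ)) (lt_min (by linarith) (by linarith)) (by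
        have := min_le_left (v 1 / 2) (vbar - μ); linarith)
      (min_le_right _ _)
    exact ⟨F, hF⟩
  haveI : Nonempty ↥(Fmean μ vbar) := hnonempty.to_subtype
  have hbddBelow : BddBelow (Set.range fun F : ↥(Fmean μ vbar) =>
      ∑ i ∈ Finset.Icc 1 n, v i * x i * ((F.1 : Measure ℝ) (Icc (v i) vbar)).toReal) := by
    refine ⟨0, fun r hr => ?_⟩
    obtain ⟨F, rfl⟩ := hr
    apply Finset.sum_nonneg
    intro i hi
    exact mul_nonneg (hvnn i hi) ENNReal.toReal_nonneg
  apply le_antisymm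
  · -- inf ≤ sSup
    apply le_of_forall_pos_le_add
    intro ε hε
    set T := ∑ i ∈ Finset.Icc 1 n, v i * x i with hT
    have hT0 : 0 ≤ T := Finset.sum_nonneg hvnn
    set δ := min (min (v 1 / 2) (vbar - μ)) (ε * (vbar - μ) / (T + 1)) with hδ
    have hδ0 : 0 < δ := by
      apply lt_min (lt_min (by linarith) (by linarith))
      exact div_pos (mul_pos hε (by linarith)) (by linarith)
    have hδ1 : δ < v 1 := by
      have h1 := min_le_left (min (v 1 / 2) (vbar - μ)) (ε * (vbar - μ) / (T + 1))
      have h2 := min_le_left (v 1 / 2) (vbar - μ)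
      calc δ ≤ min (v 1 / 2) (vbar - μ) := h1
        _ ≤ v 1 / 2 := h2
        _ < v 1 := by linarith
    have hδ2 : δ ≤ vbar - μ :=
      le_trans (min_le_left _ _) (min_le_right _ _)
    obtain ⟨F, hF, hrev⟩ := construct μ vbar hμ hμv n v x hv0 hmono' hvtop hvnn j k hj hk p
      hp0 hp1 hmean δ hδ0 hδ1 hδ2
    have hδ3 : δ / (vbar - μ) * T ≤ ε := by
      have hδle : δ ≤ ε * (vbar - μ) / (T + 1) := min_le_right _ _
      have hvμ : (0:ℝ) < vbar - μ := by linarith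
      rw [div_mul_eq_mul_div, div_le_iff₀ hvμ]
      calc δ * T ≤ (ε * (vbar - μ) / (T + 1)) * T := by
            apply mul_le_mul_of_nonneg_right hδle hT0
        _ ≤ ε * (vbar - μ) := by
            rw [div_mul_eq_mul_div, div_le_iff₀ (by linarith : (0:ℝ) < T + 1)]
            nlinarith
    have hstep : (⨅ F : ↥(Fmean μ vbar),
        ∑ i ∈ Finset.Icc 1 n, v i * x i * (F.1 (Icc (v i) vbar)).toReal) ≤
        ∑ i ∈ Finset.Icc 1 n, v i * x i * (F (Icc (v i) vbar)).toReal :=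
      ciInf_le hbddBelow ⟨F, hF⟩
    calc (⨅ F : ↥(Fmean μ vbar),
          ∑ i ∈ Finset.Icc 1 n, v i * x i * (F.1 (Icc (v i) vbar)).toReal)
        ≤ ∑ i ∈ Finset.Icc 1 n, v i * x i * (F (Icc (v i) vbar)).toReal := hstep
      _ ≤ (p * (∑ i ∈ Finset.Icc 1 (j - 1), v i * x i)
            + (1 - p) * (∑ i ∈ Finset.Icc 1 (k - 1), v i * x i))
            + (δ / (vbar - μ)) * T := hrev
      _ ≤ V + ε := by linarith [hpc', hδ3]
  · -- sSup ≤ inf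
    have hDne : D.Nonempty := by
      refine ⟨0, 0, le_rfl, fun j' hj' => ?_⟩
      simpa using hc0 j' hj'
    apply csSup_le hDne
    intro t ht
    obtain ⟨l, hl, hcon⟩ := ht
    apply le_ciInf
    intro F
    exact weak_dual μ vbar (by linarith) n v x hvnn hvtop t l hl hcon F.1 F.2
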